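/- The number of 2-Stirling permutations of size n equals the double factorial (2n-1)!! = 1·3·5···(2n-1). -/

import Mathlib

/-- A `k`-Stirling permutation of size `n`, encoded as a word (list) over `{1,…,n}`. -/
def IsStirlingWord (k n : ℕ) (w : List ℕ) : Prop :=
  w.length = k * n ∧
  (∀ i, 1 ≤ i → i ≤ n → w.count i = k) ∧
  (∀ p q r, p < q → q < r → r < w.length →
    w.getD p 0 = w.getD r 0 → w.getD p 0 ≤ w.getD q 0)

namespace StirlingAux

lemma bounds {n : ℕ} {w : List ℕ} (hw : IsStirlingWord 2 n w) :
    ∀ x ∈ w, 1 ≤ x ∧ x ≤ n := by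
  obtain ⟨hlen, hcnt, -⟩ := hw
  have hsub : Finset.Icc 1 n ⊆ w.toFinset := by
    intro i hi
    simp only [Finset.mem_Icc] at hi
    have : w.count i = 2 := hcnt i hi.1 hi.2
    have : i ∈ w := by
      rw [← List.count_pos_iff]
      omega
    simpa using this
  have hsum : ∑ a ∈ w.toFinset, w.count a = w.length := by
    simpa using Multiset.toFinset_sum_count_eq (w : Multiset ℕ)
  have hsum2 : ∑ a ∈ Finset.Icc 1 n, w.count a = 2 * n := by
    rw [Finset.sum_congr rfl (fun i hi => by
      simp only [Finset.mem_Icc] at hi; exact hcnt i hi.1 hi.2)]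
    rw [Finset.sum_const, Nat.card_Icc, smul_eq_mul]
    omega
  have h3 : ∑ a ∈ w.toFinset \ Finset.Icc 1 n, w.count a
      + ∑ a ∈ Finset.Icc 1 n, w.count a = ∑ a ∈ w.toFinset, w.count a :=
    Finset.sum_sdiff hsub
  intro x hx
  by_contra hcon
  have hxT : x ∈ w.toFinset \ Finset.Icc 1 n := by
    push_neg at hcon
    refine Finset.mem_sdiff.2 ⟨List.mem_toFinset.2 hx, ?_⟩
    simp only [Finset.mem_Icc]
    omega
  have h1 : 1 ≤ w.count x := by
    rw [List.one_le_count_iff]; exact hx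
  have h4 := Finset.sum_le_sum_of_subset (f := w.count) (Finset.singleton_subset_iff.2 hxT)
  simp only [Finset.sum_singleton] at h4
  omega

/-- insert the pair `m, m` at position `j` -/
def ins (j m : ℕ) (w : List ℕ) : List ℕ := w.take j ++ m :: m :: w.drop j

lemma ins_length (j m : ℕ) (w : List ℕ) (hj : j ≤ w.length) :
    (ins j m w).length = w.length + 2 := by
  simp [ins]; omega

lemma ins_count (j m : ℕ) (w : List ℕ) (x : ℕ) :
    (ins j m w).count x = w.count x + if x = m then 2 else 0 := by
  have h : w.count x = (w.take j).count x + (w.drop j).count x := by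
    rw [← List.count_append, List.take_append_drop]
  rw [ins, List.count_append, List.count_cons, List.count_cons]
  by_cases hx : x = m
  · subst hx; simp; omega
  · rw [if_neg hx, h]
    have hmx : ¬ m = x := fun hh => hx hh.symm
    simp [hx, hmx]

lemma ins_getD {j : ℕ} (m : ℕ) {w : List ℕ} (hj : j ≤ w.length) (t : ℕ)
    (ht : t < w.length + 2) :
    (ins j m w).getD t 0 =
      if t < j then w.getD t 0 else if t < j + 2 then m else w.getD (t - 2) 0 := by
  have hlen : t < (ins j m w).length := by rw [ins_length j m w hj]; exact ht
  rw [List.getD_eq_getElem _ _ hlen]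
  simp only [ins, List.getElem_append, List.length_take]
  split
  · rename_i h
    rw [if_pos (by omega), List.getD_eq_getElem _ _ (by omega), List.getElem_take]
  · rename_i h
    have hjt : j ≤ t := by omega
    rw [if_neg (by omega)]
    by_cases h2 : t < j + 2
    · have h5 : t - min j w.length = 0 ∨ t - min j w.length = 1 := by omega
      rcases h5 with h5 | h5 <;> simp only [h5] <;> simp [h2]
    · rw [if_neg (by omega)]
      have h4 : t - min j w.length = t - j - 2 + 2 := by omega
      simp only [h4, List.getElem_cons_succ]
      rw [List.getD_eq_getElem _ _ (by omega)]
      rw [List.getElem_drop]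
      simp only [show j + (t - j - 2) = t - 2 from by omega]
lemma getD_mem {w : List ℕ} {t : ℕ} (ht : t < w.length) : w.getD t 0 ∈ w := by
  rw [List.getD_eq_getElem _ _ ht]; exact List.getElem_mem _

lemma ins_stirling {n j : ℕ} {w : List ℕ} (hw : IsStirlingWord 2 n w)
    (hj : j ≤ w.length) : IsStirlingWord 2 (n + 1) (ins j (n + 1) w) := by
  obtain ⟨hlen, hcnt, hord⟩ := hw
  have hb := bounds ⟨hlen, hcnt, hord⟩
  refine ⟨by rw [ins_length _ _ _ hj]; omega, ?_, ?_⟩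
  · intro i h1 h2
    rw [ins_count]
    rcases Nat.lt_or_ge i (n + 1) with h | h
    · rw [if_neg (by omega), hcnt i h1 (by omega)]
    · have hme : i = n + 1 := by omega
      have hnotin : w.count i = 0 := by
        rw [List.count_eq_zero]
        intro hmem
        exact absurd (hb i hmem).2 (by omega)
      rw [hnotin, if_pos (by omega)]
  · intro p q r hpq hqr hr hpr
    rw [ins_length _ _ _ hj] at hr
    rw [ins_getD _ hj p (by omega), ins_getD _ hj q (by omega), ins_getD _ hj r hr] at *
    have hval : ∀ t, t < w.length → w.getD t 0 ≤ n := fun t ht => (hb _ (getD_mem ht)).2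
    by_cases hpblk : ¬ p < j ∧ p < j + 2
    · -- value at p is n+1
      rw [if_neg hpblk.1, if_pos hpblk.2] at *
      rcases Nat.lt_or_ge r j with h | h
      · omega
      · by_cases h2 : r < j + 2
        · omega
        · exfalso
          rw [if_neg (by omega), if_neg (by omega)] at hpr
          have := hval (r - 2) (by omega)
          omega
    · push_neg at hpblk
      have hpc : (p < j ∧ (if p < j then w.getD p 0 else if p < j + 2 then (n+1) else w.getD (p-2) 0) = w.getD p 0)
          ∨ (j + 2 ≤ p ∧ (if p < j then w.getD p 0 else if p < j + 2 then (n+1) else w.getD (p-2) 0) = w.getD (p-2) 0) := by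
        rcases Nat.lt_or_ge p j with h | h
        · exact Or.inl ⟨h, by rw [if_pos h]⟩
        · exact Or.inr ⟨by omega, by rw [if_neg (by omega), if_neg (by omega)]⟩
      have hqc : q < j ∨ (¬ q < j ∧ q < j + 2) ∨ j + 2 ≤ q := by omega
      have hrc : (r < j ∧ (if r < j then w.getD r 0 else if r < j + 2 then (n+1) else w.getD (r-2) 0) = w.getD r 0)
          ∨ (j + 2 ≤ r ∧ (if r < j then w.getD r 0 else if r < j + 2 then (n+1) else w.getD (r-2) 0) = w.getD (r-2) 0)
          ∨ (¬ r < j ∧ r < j + 2) := by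
        rcases Nat.lt_or_ge r j with h | h
        · exact Or.inl ⟨h, by rw [if_pos h]⟩
        · by_cases h2 : r < j + 2
          · exact Or.inr (Or.inr ⟨by omega, h2⟩)
          · exact Or.inr (Or.inl ⟨by omega, by rw [if_neg (by omega), if_neg (by omega)]⟩)
      rcases hpc with ⟨hpj, hpe⟩ | ⟨hpj, hpe⟩ <;> rw [hpe] at hpr ⊢ <;>
        rcases hrc with ⟨hrj, hre⟩ | ⟨hrj, hre⟩ | ⟨hrj1, hrj2⟩
      · -- p<j, r<j
        rw [hre] at hpr
        rcases hqc with hq1 | ⟨hq1, hq2⟩ | hq1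
        · rw [if_pos hq1]; exact hord p q r hpq hqr (by omega) hpr
        · omega
        · omega
      · -- p<j, r≥j+2
        rw [hre] at hpr
        rcases hqc with hq1 | ⟨hq1, hq2⟩ | hq1
        · rw [if_pos hq1]; exact hord p q (r - 2) hpq (by omega) (by omega) hpr
        · rw [if_neg hq1, if_pos hq2]
          have := hval p (by omega)
          omega
        · rw [if_neg (by omega : ¬ q < j), if_neg (by omega : ¬ q < j + 2)]
          exact hord p (q - 2) (r - 2) (by omega) (by omega) (by omega) hpr
      · -- p<j, r in block : contradiction
        exfalso
        rw [if_neg hrj1, if_pos hrj2] at hpr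
        have := hval p (by omega)
        omega
      · omega
      · -- p≥j+2, r≥j+2
        rw [hre] at hpr
        rcases hqc with hq1 | ⟨hq1, hq2⟩ | hq1
        · omega
        · omega
        · rw [if_neg (by omega : ¬ q < j), if_neg (by omega : ¬ q < j + 2)]
          exact hord (p - 2) (q - 2) (r - 2) (by omega) (by omega) (by omega) hpr
      · omega

lemma two_mem_split {m : ℕ} {w : List ℕ} (h : 2 ≤ w.count m) :
    ∃ a b c : List ℕ, w = a ++ m :: (b ++ m :: c) := by
  induction w with
  | nil => simp at h
  | cons x t ih =>
    rcases eq_or_ne m x with hx | hx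
    · subst hx
      have hmem : m ∈ t := by
        rw [← List.count_pos_iff]
        rw [List.count_cons_self] at h
        omega
      obtain ⟨s, u, hsu⟩ := List.append_of_mem hmem
      exact ⟨[], s, u, by simp [hsu]⟩
    · rw [List.count_cons_of_ne hx.symm] at h
      obtain ⟨a, b, c, habc⟩ := ih h
      exact ⟨x :: a, b, c, by simp [habc]⟩

lemma getD_append_right' (a l : List ℕ) (k : ℕ) :
    (a ++ l).getD (a.length + k) 0 = l.getD k 0 := by
  rcases Nat.lt_or_ge k l.length with h | h
  · rw [List.getD_eq_getElem _ _ (by simp; omega), List.getD_eq_getElem _ _ h]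
    rw [List.getElem_append_right (by omega)]
    congr 1
    omega
  · rw [List.getD_eq_default _ _ (by simp; omega), List.getD_eq_default _ _ (by omega)]

lemma decomp {n : ℕ} {w : List ℕ} (hw : IsStirlingWord 2 (n + 1) w) :
    ∃ a c : List ℕ, w = ins a.length (n + 1) (a ++ c) ∧
      IsStirlingWord 2 n (a ++ c) ∧ a.length ≤ 2 * n := by
  have hb := bounds hw
  obtain ⟨hlen, hcnt, hord⟩ := hw
  set m := n + 1 with hm
  have hm2 : w.count m = 2 := hcnt m (by omega) le_rfl
  obtain ⟨a, b, c, habc⟩ := two_mem_split (m := m) (w := w) (by omega)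
  have hcountsplit : w.count m = a.count m + b.count m + c.count m + 2 := by
    rw [habc]; simp [List.count_append, List.count_cons]; omega
  have hbm : b.count m = 0 := by omega
  -- show b = []
  have hbnil : b = [] := by
    by_contra hne
    have hblen : 1 ≤ b.length := by
      cases b with
      | nil => exact absurd rfl hne
      | cons _ _ => simp
    have hp : w.getD a.length 0 = m := by
      rw [habc, show a.length = a.length + 0 from rfl, getD_append_right' a _ 0]
      rfl
    have hq : w.getD (a.length + 1) 0 = b.getD 0 0 := by
      rw [habc, getD_append_right' a _ 1]
      simp only [List.getD_cons_succ]
      cases b with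
      | nil => exact absurd rfl hne
      | cons y t => simp
    have hr : w.getD (a.length + 1 + b.length) 0 = m := by
      rw [habc, show a.length + 1 + b.length = a.length + (1 + b.length) from by omega,
        getD_append_right' a _ (1 + b.length)]
      rw [show 1 + b.length = b.length + 1 from by omega]
      simp only [List.getD_cons_succ]
      rw [show b.length = b.length + 0 from rfl, getD_append_right' b _ 0]
      rfl
    have hrlt : a.length + 1 + b.length < w.length := by
      rw [habc]; simp; omega
    have horder := hord a.length (a.length + 1) (a.length + 1 + b.length)
      (by omega) (by omega) hrlt (by rw [hp, hr])
    rw [hp, hq] at horder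
    have hmem : b.getD 0 0 ∈ b := getD_mem (by omega)
    have := (hb (b.getD 0 0) (by rw [habc]; simp only [List.mem_append, List.mem_cons]; tauto)).2
    have : b.getD 0 0 = m := by omega
    rw [this] at hmem
    rw [List.count_eq_zero] at hbm
    exact hbm hmem
  subst hbnil
  simp only [List.nil_append] at habc
  have hlen2 : a.length + c.length = 2 * n := by
    rw [habc] at hlen; simp at hlen; omega
  have hwins : w = ins a.length m (a ++ c) := by
    rw [ins, List.take_left, List.drop_left, habc]
  refine ⟨a, c, hwins, ⟨by simp; omega, ?_, ?_⟩, by omega⟩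
  · intro i h1 h2
    have hi2 : w.count i = 2 := hcnt i h1 (by omega)
    rw [habc] at hi2
    have him : ¬ i = m := by omega
    have him2 : ¬ m = i := by omega
    simp only [List.count_append, List.count_cons, beq_iff_eq, him, him2, if_false] at hi2 ⊢
    omega
  · -- order condition for a ++ c
    have hjlen : a.length ≤ (a ++ c).length := by simp
    have key : ∀ s, s < (a ++ c).length →
        w.getD (if s < a.length then s else s + 2) 0 = (a ++ c).getD s 0 := by
      intro s hs
      simp only [List.length_append] at hs
      rw [hwins]
      split
      · rename_i h
        rw [ins_getD _ hjlen _ (by simp; omega), if_pos h]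
      · rename_i h
        rw [ins_getD _ hjlen _ (by simp; omega), if_neg (by omega), if_neg (by omega)]
        simp
    intro p q r hpq hqr hr hpr
    have hlenac : (a ++ c).length = 2 * n := by simp; omega
    have hp' := key p (by omega)
    have hq' := key q (by omega)
    have hr' := key r (by omega)
    have hwl : w.length = 2 * n + 2 := by omega
    rw [← hp', ← hr'] at hpr
    rw [← hp', ← hq']
    refine hord _ _ _ ?_ ?_ ?_ hpr
    · split <;> split <;> omega
    · split <;> split <;> omega
    · split <;> omega

lemma ins_inj {n j1 j2 : ℕ} {w1 w2 : List ℕ}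
    (h1 : IsStirlingWord 2 n w1) (h2 : IsStirlingWord 2 n w2)
    (hj1 : j1 ≤ w1.length) (hj2 : j2 ≤ w2.length)
    (heq : ins j1 (n + 1) w1 = ins j2 (n + 1) w2) : j1 = j2 ∧ w1 = w2 := by
  have hl1 : w1.length = 2 * n := h1.1
  have hl2 : w2.length = 2 * n := h2.1
  have hgd : ∀ t, (ins j1 (n + 1) w1).getD t 0 = (ins j2 (n + 1) w2).getD t 0 := by
    intro t; rw [heq]
  have hne1 : ∀ t, t < w1.length → w1.getD t 0 ≠ n + 1 := by
    intro t ht hcon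
    have := (bounds h1 _ (getD_mem ht)).2
    omega
  have hne2 : ∀ t, t < w2.length → w2.getD t 0 ≠ n + 1 := by
    intro t ht hcon
    have := (bounds h2 _ (getD_mem ht)).2
    omega
  have hjj : j1 = j2 := by
    by_contra hne
    rcases Nat.lt_or_ge j1 j2 with h | h
    · have e := hgd j1
      rw [ins_getD _ hj1 j1 (by omega), ins_getD _ hj2 j1 (by omega)] at e
      rw [if_neg (lt_irrefl _), if_pos (by omega), if_pos h] at e
      exact hne2 j1 (by omega) e.symm
    · have h' : j2 < j1 := by omega
      have e := hgd j2
      rw [ins_getD _ hj1 j2 (by omega), ins_getD _ hj2 j2 (by omega)] at e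
      rw [if_pos h'] at e
      rw [if_neg (lt_irrefl j2), if_pos (show j2 < j2 + 2 from by omega)] at e
      exact hne1 j2 (by omega) e
  subst hjj
  refine ⟨rfl, ?_⟩
  obtain ⟨e1, e2⟩ := List.append_inj heq (by simp; omega)
  simp only [List.cons.injEq, true_and] at e2
  rw [← List.take_append_drop j1 w1, ← List.take_append_drop j1 w2, e1, e2]

lemma card_succ (n : ℕ) :
    Nat.card {w : List ℕ // IsStirlingWord 2 (n + 1) w} =
      (2 * n + 1) * Nat.card {w : List ℕ // IsStirlingWord 2 n w} := by
  classical
  have hbij : Function.Bijective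
      (fun x : Fin (2 * n + 1) × {w : List ℕ // IsStirlingWord 2 n w} =>
        (⟨ins x.1 (n + 1) x.2.1,
          ins_stirling x.2.2 (by have := x.2.2.1; have := x.1.2; omega)⟩ :
          {w : List ℕ // IsStirlingWord 2 (n + 1) w})) := by
    constructor
    · rintro ⟨j1, w1⟩ ⟨j2, w2⟩ h
      simp only [Subtype.mk.injEq] at h
      obtain ⟨hj, hw⟩ := ins_inj w1.2 w2.2
        (by have := w1.2.1; have := j1.2; omega)
        (by have := w2.2.1; have := j2.2; omega) h
      simp only [Prod.mk.injEq]
      exact ⟨Fin.ext hj, Subtype.ext hw⟩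
    · rintro ⟨w, hw⟩
      obtain ⟨a, c, hwe, hac, hal⟩ := decomp hw
      exact ⟨(⟨a.length, by omega⟩, ⟨a ++ c, hac⟩), Subtype.ext hwe.symm⟩
  have h := Nat.card_eq_of_bijective _ hbij
  rw [← h, Nat.card_prod, Nat.card_eq_fintype_card, Fintype.card_fin]

lemma card_zero : Nat.card {w : List ℕ // IsStirlingWord 2 0 w} = 1 := by
  have hu : Unique {w : List ℕ // IsStirlingWord 2 0 w} := {
    default := ⟨[], by
      refine ⟨rfl, fun i h1 h2 => by omega, fun p q r _ _ hr _ => by simp at hr⟩⟩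
    uniq := fun w => Subtype.ext (by
      have := w.2.1
      exact List.length_eq_zero_iff.mp (by omega)) }
  exact Nat.card_unique

lemma card_all (n : ℕ) :
    Nat.card {w : List ℕ // IsStirlingWord 2 n w} = ∏ i ∈ Finset.range n, (2 * i + 1) := by
  induction n with
  | zero => simpa using card_zero
  | succ k ih =>
    rw [card_succ, ih, Finset.prod_range_succ]
    ring

end StirlingAux

/-- The number of 2-Stirling permutations of size `n` is `(2n-1)!! = ∏_{i=1}^{n-1}(2i+1)`. -/
theorem two_stirling_count (n : ℕ) (hn : 1 ≤ n) :
    Nat.card {w : List ℕ // IsStirlingWord 2 n w} =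
      ∏ i ∈ Finset.Icc 1 (n - 1), (2 * i + 1) := by
  obtain ⟨k, rfl⟩ : ∃ k, n = k + 1 := ⟨n - 1, by omega⟩
  rw [StirlingAux.card_all]
  have hs : Finset.range (k + 1) = insert 0 (Finset.Icc 1 k) := by
    ext x
    simp only [Finset.mem_range, Finset.mem_insert, Finset.mem_Icc]
    omega
  rw [hs, Finset.prod_insert (by simp)]
  simp
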